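/- Let (A_n, B_n)_{n≥1} be a deterministic sequence in S_δ × R_+^d and set X_n^x = g_n∘⋯∘g_1(x) where g_k(x) = A_k x + B_k. Then for all x, y ∈ R_+^d and all n, |X_n^x − X_n^y| ≤ ‖A_n⋯A_1‖·|x − y|, and moreover |X_n^x| ≥ δ·Σ_{k=1}^n |B_k| / ‖A_k⋯A_1‖ · ‖A_n⋯A_1‖; in particular |X_n^x − X_n^y|·1_{|X_n^x| ≤ K} ≤ K|x−y| / (δ Σ_{k=1}^n |B_k|/‖A_k⋯A_1‖). -/

import Mathlib

open Matrix BigOperators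

/-- The ℓ¹ norm on `ℝ^d`. -/
def l1 {d : ℕ} (x : Fin d → ℝ) : ℝ := ∑ i, |x i|

/-- The maximum column sum of a matrix. -/
noncomputable def matNorm {d : ℕ} (A : Matrix (Fin d) (Fin d) ℝ) : ℝ :=
  ⨆ j, ∑ i, A i j

/-- The semigroup `S` of nonnegative matrices each of whose columns contains a
positive entry. -/
def memS {d : ℕ} (A : Matrix (Fin d) (Fin d) ℝ) : Prop :=
  (∀ i j, 0 ≤ A i j) ∧ ∀ j, ∃ i, 0 < A i j

/-- The set `S_δ`. -/
def memSdelta {d : ℕ} (δ : ℝ) (A : Matrix (Fin d) (Fin d) ℝ) : Prop :=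
  memS A ∧ ∀ i j k, δ * A i k ≤ A i j

/-- The left product `A_n ⋯ A_1` (equal to `1` for `n = 0`). -/
def prodRev {d : ℕ} (A : ℕ → Matrix (Fin d) (Fin d) ℝ) : ℕ → Matrix (Fin d) (Fin d) ℝ
  | 0 => 1
  | n + 1 => A (n + 1) * prodRev A n

/-- The affine iteration `X_0^x = x`, `X_{n+1}^x = A_{n+1} X_n^x + B_{n+1}`. -/
def affIter {d : ℕ} (A : ℕ → Matrix (Fin d) (Fin d) ℝ) (B : ℕ → Fin d → ℝ)
    (x : Fin d → ℝ) : ℕ → Fin d → ℝ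
  | 0 => x
  | n + 1 => (A (n + 1)).mulVec (affIter A B x n) + B (n + 1)

namespace Aux18

variable {d : ℕ}

lemma l1_nonneg (v : Fin d → ℝ) : 0 ≤ l1 v :=
  Finset.sum_nonneg fun i _ => abs_nonneg _

lemma l1_eq_sum {v : Fin d → ℝ} (hv : ∀ i, 0 ≤ v i) : l1 v = ∑ i, v i :=
  Finset.sum_congr rfl fun i _ => abs_of_nonneg (hv i)

lemma mulVec_nonneg {A : Matrix (Fin d) (Fin d) ℝ} {v : Fin d → ℝ}
    (hA : ∀ i j, 0 ≤ A i j) (hv : ∀ i, 0 ≤ v i) : ∀ i, 0 ≤ A.mulVec v i := by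
  intro i
  simp only [Matrix.mulVec, dotProduct]
  exact Finset.sum_nonneg fun j _ => mul_nonneg (hA i j) (hv j)

lemma le_matNorm (A : Matrix (Fin d) (Fin d) ℝ) (j : Fin d) :
    (∑ i, A i j) ≤ matNorm A :=
  le_ciSup (Set.Finite.bddAbove (Set.finite_range fun j => ∑ i, A i j)) j

lemma matNorm_le [Nonempty (Fin d)] {A : Matrix (Fin d) (Fin d) ℝ} {c : ℝ}
    (h : ∀ j, (∑ i, A i j) ≤ c) : matNorm A ≤ c := ciSup_le h

lemma matNorm_nonneg [Nonempty (Fin d)] {A : Matrix (Fin d) (Fin d) ℝ}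
    (hA : ∀ i j, 0 ≤ A i j) : 0 ≤ matNorm A := by
  obtain ⟨j⟩ := (inferInstance : Nonempty (Fin d))
  exact le_trans (Finset.sum_nonneg fun i _ => hA i j) (le_matNorm A j)

lemma matNorm_pos [Nonempty (Fin d)] {A : Matrix (Fin d) (Fin d) ℝ}
    (hA : memS A) : 0 < matNorm A := by
  obtain ⟨j⟩ := (inferInstance : Nonempty (Fin d))
  obtain ⟨i, hi⟩ := hA.2 j
  refine lt_of_lt_of_le ?_ (le_matNorm A j)
  exact Finset.sum_pos' (fun i' _ => hA.1 i' j) ⟨i, Finset.mem_univ i, hi⟩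

lemma l1_mulVec_le [Nonempty (Fin d)] {A : Matrix (Fin d) (Fin d) ℝ} (v : Fin d → ℝ)
    (hA : ∀ i j, 0 ≤ A i j) : l1 (A.mulVec v) ≤ matNorm A * l1 v := by
  calc l1 (A.mulVec v) ≤ ∑ i, ∑ j, A i j * |v j| := by
        refine Finset.sum_le_sum fun i _ => ?_
        simp only [Matrix.mulVec, dotProduct]
        refine le_trans (Finset.abs_sum_le_sum_abs _ _) ?_
        refine Finset.sum_le_sum fun j _ => ?_
        rw [abs_mul, abs_of_nonneg (hA i j)]
    _ = ∑ j, (∑ i, A i j) * |v j| := by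
        rw [Finset.sum_comm]
        exact Finset.sum_congr rfl fun j _ => (Finset.sum_mul _ _ _).symm
    _ ≤ ∑ j, matNorm A * |v j| :=
        Finset.sum_le_sum fun j _ =>
          mul_le_mul_of_nonneg_right (le_matNorm A j) (abs_nonneg _)
    _ = matNorm A * l1 v := (Finset.mul_sum _ _ _).symm

lemma l1_mulVec_ge [Nonempty (Fin d)] {δ : ℝ} {A : Matrix (Fin d) (Fin d) ℝ}
    {v : Fin d → ℝ} (hδ : 0 ≤ δ) (hA : memSdelta δ A) (hv : ∀ i, 0 ≤ v i) :
    δ * matNorm A * l1 v ≤ l1 (A.mulVec v) := by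
  obtain ⟨k0, hk0⟩ := exists_eq_ciSup_of_finite (f := fun j => ∑ i, A i j)
  have hl1 : l1 (A.mulVec v) = ∑ i, ∑ j, A i j * v j := by
    refine (l1_eq_sum (mulVec_nonneg hA.1.1 hv)).trans ?_
    rfl
  rw [hl1, l1_eq_sum hv]
  calc δ * matNorm A * (∑ j, v j) = ∑ i, ∑ j, δ * A i k0 * v j := by
        rw [matNorm, ← hk0, mul_assoc, Finset.sum_mul_sum, Finset.mul_sum]
        refine Finset.sum_congr rfl fun i _ => ?_
        rw [Finset.mul_sum]
        exact Finset.sum_congr rfl fun j _ => by ring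
    _ ≤ ∑ i, ∑ j, A i j * v j := by
        refine Finset.sum_le_sum fun i _ => Finset.sum_le_sum fun j _ => ?_
        exact mul_le_mul_of_nonneg_right (hA.2 i j k0) (hv j)

lemma matNorm_mul_le [Nonempty (Fin d)] {A B : Matrix (Fin d) (Fin d) ℝ}
    (hA : ∀ i j, 0 ≤ A i j) (hB : ∀ i j, 0 ≤ B i j) :
    matNorm (A * B) ≤ matNorm A * matNorm B := by
  refine matNorm_le fun j => ?_
  calc ∑ i, (A * B) i j = ∑ l, (∑ i, A i l) * B l j := by
        simp only [Matrix.mul_apply]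
        rw [Finset.sum_comm]
        exact Finset.sum_congr rfl fun l _ => (Finset.sum_mul _ _ _).symm
    _ ≤ ∑ l, matNorm A * B l j :=
        Finset.sum_le_sum fun l _ =>
          mul_le_mul_of_nonneg_right (le_matNorm A l) (hB l j)
    _ = matNorm A * ∑ l, B l j := (Finset.mul_sum _ _ _).symm
    _ ≤ matNorm A * matNorm B :=
        mul_le_mul_of_nonneg_left (le_matNorm B j) (matNorm_nonneg hA)

lemma memSdelta_mul {δ : ℝ} {A B : Matrix (Fin d) (Fin d) ℝ} (hδ : 0 ≤ δ)
    (hA : memSdelta δ A) (hB : memSdelta δ B) : memSdelta δ (A * B) := by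
  refine ⟨⟨fun i j => ?_, fun j => ?_⟩, fun i j k => ?_⟩
  · rw [Matrix.mul_apply]
    exact Finset.sum_nonneg fun l _ => mul_nonneg (hA.1.1 i l) (hB.1.1 l j)
  · obtain ⟨l, hl⟩ := hB.1.2 j
    obtain ⟨i, hi⟩ := hA.1.2 l
    refine ⟨i, ?_⟩
    rw [Matrix.mul_apply]
    exact Finset.sum_pos' (fun m _ => mul_nonneg (hA.1.1 i m) (hB.1.1 m j))
      ⟨l, Finset.mem_univ l, mul_pos hi hl⟩
  · simp only [Matrix.mul_apply, Finset.mul_sum]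
    refine Finset.sum_le_sum fun l _ => ?_
    calc δ * (A i l * B l k) = A i l * (δ * B l k) := by ring
      _ ≤ A i l * B l j := mul_le_mul_of_nonneg_left (hB.2 l j k) (hA.1.1 i l)

lemma one_nonneg : ∀ i j, (0:ℝ) ≤ (1 : Matrix (Fin d) (Fin d) ℝ) i j := by
  intro i j
  by_cases h : i = j <;> simp [Matrix.one_apply, h]

lemma prodRev_nonneg {δ : ℝ} {A : ℕ → Matrix (Fin d) (Fin d) ℝ}
    (hA : ∀ n, 1 ≤ n → memSdelta δ (A n)) (n : ℕ) :
    ∀ i j, 0 ≤ prodRev A n i j := by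
  induction n with
  | zero => exact one_nonneg
  | succ n ih =>
      intro i j
      rw [prodRev, Matrix.mul_apply]
      exact Finset.sum_nonneg fun l _ =>
        mul_nonneg ((hA (n+1) (by omega)).1.1 i l) (ih l j)

lemma prodRev_memSdelta {δ : ℝ} {A : ℕ → Matrix (Fin d) (Fin d) ℝ} (hδ : 0 ≤ δ) (hδ1 : δ ≤ 1)
    (hA : ∀ n, 1 ≤ n → memSdelta δ (A n)) {n : ℕ} (hn : 1 ≤ n) :
    memSdelta δ (prodRev A n) := by
  induction n with
  | zero => omega
  | succ n ih =>
      rcases Nat.eq_zero_or_pos n with h | h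
      · subst h
        rw [prodRev, prodRev, mul_one]
        exact hA 1 le_rfl
      · exact memSdelta_mul hδ (hA (n+1) (by omega)) (ih h)

/-- `A_n ⋯ A_{k+1}` -/
def tailProd {d : ℕ} (A : ℕ → Matrix (Fin d) (Fin d) ℝ) (k n : ℕ) :
    Matrix (Fin d) (Fin d) ℝ :=
  prodRev (fun m => A (m + k)) (n - k)

lemma tailProd_self (A : ℕ → Matrix (Fin d) (Fin d) ℝ) (k : ℕ) :
    tailProd A k k = 1 := by
  simp [tailProd, prodRev]

lemma tailProd_succ {A : ℕ → Matrix (Fin d) (Fin d) ℝ} {k n : ℕ} (h : k ≤ n) :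
    tailProd A k (n + 1) = A (n + 1) * tailProd A k n := by
  have h1 : n + 1 - k = (n - k) + 1 := by omega
  have h2 : (n - k) + 1 + k = n + 1 := by omega
  rw [tailProd, h1, prodRev, h2, tailProd]

lemma tailProd_memSdelta {δ : ℝ} {A : ℕ → Matrix (Fin d) (Fin d) ℝ} (hδ : 0 ≤ δ) (hδ1 : δ ≤ 1)
    (hA : ∀ n, 1 ≤ n → memSdelta δ (A n)) {k n : ℕ} (h : k < n) :
    memSdelta δ (tailProd A k n) := by
  rw [tailProd]
  refine prodRev_memSdelta hδ hδ1 (fun m hm => ?_) (by omega)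
  exact hA (m + k) (by omega)

lemma tailProd_mul_prodRev {A : ℕ → Matrix (Fin d) (Fin d) ℝ} {k n : ℕ} (h : k ≤ n) :
    tailProd A k n * prodRev A k = prodRev A n := by
  induction n with
  | zero =>
      have : k = 0 := by omega
      subst this
      rw [tailProd_self, one_mul]
  | succ n ih =>
      rcases Nat.lt_or_ge k (n + 1) with h' | h'
      · have hk : k ≤ n := by omega
        rw [tailProd_succ hk, mul_assoc, ih hk, prodRev]
      · have : k = n + 1 := by omega
        subst this
        rw [tailProd_self, one_mul]

lemma mulVec_finsum {A : Matrix (Fin d) (Fin d) ℝ} {s : Finset ℕ} {f : ℕ → Fin d → ℝ} :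
    A.mulVec (∑ k ∈ s, f k) = ∑ k ∈ s, A.mulVec (f k) := by
  ext i
  simp only [Matrix.mulVec, dotProduct, Finset.sum_apply, Finset.mul_sum]
  rw [Finset.sum_comm]

lemma affIter_decomp {A : ℕ → Matrix (Fin d) (Fin d) ℝ} {B : ℕ → Fin d → ℝ}
    (x : Fin d → ℝ) (n : ℕ) :
    affIter A B x n = (prodRev A n).mulVec x +
      ∑ k ∈ Finset.Icc 1 n, (tailProd A k n).mulVec (B k) := by
  induction n with
  | zero => simp [affIter, prodRev, Matrix.one_mulVec]
  | succ n ih =>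
      rw [affIter, ih, Matrix.mulVec_add, mulVec_finsum, Matrix.mulVec_mulVec,
        Finset.sum_Icc_succ_top (by omega : 1 ≤ n + 1)]
      rw [show A (n+1) * prodRev A n = prodRev A (n+1) from rfl]
      rw [tailProd_self, Matrix.one_mulVec]
      have : ∀ k ∈ Finset.Icc 1 n,
          (A (n+1)).mulVec ((tailProd A k n).mulVec (B k)) =
            (tailProd A k (n+1)).mulVec (B k) := by
        intro k hk
        rw [Finset.mem_Icc] at hk
        rw [Matrix.mulVec_mulVec, tailProd_succ hk.2]
      rw [Finset.sum_congr rfl this]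
      abel

end Aux18


open Aux18 in
theorem stmt18 {d : ℕ} (hd : 2 ≤ d) (δ : ℝ) (hδ0 : 0 < δ) (hδ1 : δ ≤ 1)
    (A : ℕ → Matrix (Fin d) (Fin d) ℝ) (B : ℕ → Fin d → ℝ)
    (hA : ∀ n, 1 ≤ n → memSdelta δ (A n)) (hB : ∀ n i, 0 ≤ B n i)
    (x y : Fin d → ℝ) (hx : ∀ i, 0 ≤ x i) (hy : ∀ i, 0 ≤ y i) (n : ℕ) :
    l1 (affIter A B x n - affIter A B y n) ≤ matNorm (prodRev A n) * l1 (x - y) ∧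
    δ * (∑ k ∈ Finset.Icc 1 n, l1 (B k) / matNorm (prodRev A k)) *
        matNorm (prodRev A n) ≤ l1 (affIter A B x n) ∧
    ∀ K : ℝ, l1 (affIter A B x n) ≤ K →
      (δ * ∑ k ∈ Finset.Icc 1 n, l1 (B k) / matNorm (prodRev A k)) *
          l1 (affIter A B x n - affIter A B y n) ≤ K * l1 (x - y) := by
  haveI : Nonempty (Fin d) := Fin.pos_iff_nonempty.mp (by omega)
  have hPnn : ∀ m, ∀ i j, 0 ≤ prodRev A m i j := prodRev_nonneg hA
  -- Part 1
  have hdiff : affIter A B x n - affIter A B y n = (prodRev A n).mulVec (x - y) := by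
    rw [affIter_decomp x n, affIter_decomp y n, Matrix.mulVec_sub]
    abel
  have part1 : l1 (affIter A B x n - affIter A B y n) ≤
      matNorm (prodRev A n) * l1 (x - y) := by
    rw [hdiff]
    exact l1_mulVec_le _ (hPnn n)
  -- Part 2
  have hPpos : ∀ m, 1 ≤ m → 0 < matNorm (prodRev A m) := fun m hm =>
    matNorm_pos (prodRev_memSdelta hδ0.le hδ1 hA hm).1
  have hterm : ∀ k ∈ Finset.Icc 1 n,
      δ * (l1 (B k) / matNorm (prodRev A k)) * matNorm (prodRev A n) ≤
        l1 ((tailProd A k n).mulVec (B k)) := by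
    intro k hk
    rw [Finset.mem_Icc] at hk
    rcases Nat.lt_or_ge k n with hkn | hkn
    · -- k < n : tailProd ∈ S_δ
      have hT := tailProd_memSdelta hδ0.le hδ1 hA hkn
      have h1 : matNorm (prodRev A n) ≤
          matNorm (tailProd A k n) * matNorm (prodRev A k) := by
        rw [← tailProd_mul_prodRev (le_of_lt hkn)]
        exact matNorm_mul_le hT.1.1 (hPnn k)
      have h2 : δ * matNorm (tailProd A k n) * l1 (B k) ≤
          l1 ((tailProd A k n).mulVec (B k)) :=
        l1_mulVec_ge hδ0.le hT (hB k)
      refine le_trans ?_ h2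
      have hPk := hPpos k hk.1
      have e : δ * (l1 (B k) / matNorm (prodRev A k)) * matNorm (prodRev A n)
          = (δ * (matNorm (prodRev A n) / matNorm (prodRev A k))) * l1 (B k) := by
        ring
      rw [e]
      refine mul_le_mul_of_nonneg_right ?_ (l1_nonneg _)
      exact mul_le_mul_of_nonneg_left ((div_le_iff₀ hPk).mpr h1) hδ0.le
    · -- k = n
      have hkn' : k = n := by omega
      subst hkn'
      rw [tailProd_self, Matrix.one_mulVec]
      have hPk := hPpos k hk.1
      have e : δ * (l1 (B k) / matNorm (prodRev A k)) * matNorm (prodRev A k)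
          = δ * l1 (B k) := by
        field_simp
      rw [e]
      nlinarith [l1_nonneg (B k)]
  have part2 : δ * (∑ k ∈ Finset.Icc 1 n, l1 (B k) / matNorm (prodRev A k)) *
      matNorm (prodRev A n) ≤ l1 (affIter A B x n) := by
    have hXnn : ∀ k ∈ Finset.Icc 1 n, ∀ i,
        0 ≤ (tailProd A k n).mulVec (B k) i := by
      intro k hk
      rw [Finset.mem_Icc] at hk
      rcases Nat.lt_or_ge k n with hkn | hkn
      · exact mulVec_nonneg (tailProd_memSdelta hδ0.le hδ1 hA hkn).1.1 (hB k)
      · have : k = n := by omega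
        subst this
        rw [tailProd_self, Matrix.one_mulVec]
        exact hB k
    have hdecomp := affIter_decomp (A := A) (B := B) x n
    have hsum : l1 (affIter A B x n) =
        l1 ((prodRev A n).mulVec x) +
          ∑ k ∈ Finset.Icc 1 n, l1 ((tailProd A k n).mulVec (B k)) := by
      rw [hdecomp]
      have h0 : ∀ i, 0 ≤ (∑ k ∈ Finset.Icc 1 n, (tailProd A k n).mulVec (B k)) i := by
        intro i
        rw [Finset.sum_apply]
        exact Finset.sum_nonneg fun k hk => hXnn k hk i
      rw [l1_eq_sum (v := (prodRev A n).mulVec x +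
        ∑ k ∈ Finset.Icc 1 n, (tailProd A k n).mulVec (B k))
        (fun i => add_nonneg (mulVec_nonneg (hPnn n) hx i) (h0 i))]
      simp only [Pi.add_apply, Finset.sum_add_distrib]
      congr 1
      · exact (l1_eq_sum (mulVec_nonneg (hPnn n) hx)).symm
      · simp only [Finset.sum_apply]
        rw [Finset.sum_comm]
        exact Finset.sum_congr rfl fun k hk => (l1_eq_sum (hXnn k hk)).symm
    calc δ * (∑ k ∈ Finset.Icc 1 n, l1 (B k) / matNorm (prodRev A k)) *
          matNorm (prodRev A n)
        = ∑ k ∈ Finset.Icc 1 n,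
            δ * (l1 (B k) / matNorm (prodRev A k)) * matNorm (prodRev A n) := by
          rw [Finset.mul_sum, Finset.sum_mul]
      _ ≤ ∑ k ∈ Finset.Icc 1 n, l1 ((tailProd A k n).mulVec (B k)) :=
          Finset.sum_le_sum hterm
      _ ≤ l1 (affIter A B x n) := by
          rw [hsum]
          exact le_add_of_nonneg_left (l1_nonneg _)
  refine ⟨part1, part2, fun K hK => ?_⟩
  have hSnn : 0 ≤ ∑ k ∈ Finset.Icc 1 n, l1 (B k) / matNorm (prodRev A k) := by
    refine Finset.sum_nonneg fun k hk => ?_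
    rw [Finset.mem_Icc] at hk
    exact div_nonneg (l1_nonneg _) (hPpos k hk.1).le
  calc (δ * ∑ k ∈ Finset.Icc 1 n, l1 (B k) / matNorm (prodRev A k)) *
        l1 (affIter A B x n - affIter A B y n)
      ≤ (δ * ∑ k ∈ Finset.Icc 1 n, l1 (B k) / matNorm (prodRev A k)) *
          (matNorm (prodRev A n) * l1 (x - y)) :=
        mul_le_mul_of_nonneg_left part1 (mul_nonneg hδ0.le hSnn)
    _ = (δ * (∑ k ∈ Finset.Icc 1 n, l1 (B k) / matNorm (prodRev A k)) *
          matNorm (prodRev A n)) * l1 (x - y) := by ring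
    _ ≤ K * l1 (x - y) :=
        mul_le_mul_of_nonneg_right (le_trans part2 hK) (l1_nonneg _)
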